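/- For any binary-input DMC W, I(W^-) ≤ I(W) ≤ I(W^+). -/

import Mathlib

open Finset

/-- A discrete channel: nonnegative transition "probabilities" summing to one. -/
def IsChannel {X Y : Type} [Fintype Y] (W : X → Y → ℝ) : Prop :=
  (∀ x y, 0 ≤ W x y) ∧ ∀ x, ∑ y, W x y = 1

/-- `Wd` is (stochastically) degraded with respect to `W`. -/
def Degraded {X Y Z : Type} [Fintype Y] [Fintype Z]
    (Wd : X → Z → ℝ) (W : X → Y → ℝ) : Prop :=
  ∃ P : Y → Z → ℝ, IsChannel P ∧ ∀ x z, Wd x z = ∑ y, P y z * W x y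
/-- Arıkan's minus transform. -/
noncomputable def Wminus {Y : Type} (W : Fin 2 → Y → ℝ) : Fin 2 → Y × Y → ℝ :=
  fun u1 p => ∑ u2 : Fin 2, (1 / 2 : ℝ) * W (u1 + u2) p.1 * W u2 p.2

/-- Arıkan's plus transform. -/
noncomputable def Wplus {Y : Type} (W : Fin 2 → Y → ℝ) : Fin 2 → Y × Y × Fin 2 → ℝ :=
  fun u2 p => (1 / 2 : ℝ) * W (p.2.2 + u2) p.1 * W u2 p.2.1
/-- Bhattacharyya parameter. -/
noncomputable def Zparam {Y : Type} [Fintype Y] (W : Fin 2 → Y → ℝ) : ℝ :=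
  ∑ y, Real.sqrt (W 0 y * W 1 y)

/-- Symmetric capacity (mutual information with uniform input), in bits. -/
noncomputable def Icap {Y : Type} [Fintype Y] (W : Fin 2 → Y → ℝ) : ℝ :=
  ∑ y, ∑ x : Fin 2, (1 / 2 : ℝ) * W x y *
    Real.logb 2 (W x y / ((1 / 2) * W 0 y + (1 / 2) * W 1 y))

lemma log_sum_two (a1 b1 a2 b2 : ℝ) (ha1 : 0 ≤ a1) (ha2 : 0 ≤ a2)
    (hb1 : 0 ≤ b1) (hb2 : 0 ≤ b2) (h1 : b1 = 0 → a1 = 0) (h2 : b2 = 0 → a2 = 0) :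
    (a1 + a2) * Real.log ((a1 + a2) / (b1 + b2)) ≤
      a1 * Real.log (a1 / b1) + a2 * Real.log (a2 / b2) := by
  rcases eq_or_lt_of_le hb1 with hb1' | hb1'
  · have := h1 hb1'.symm; subst this; rw [← hb1']; simp
  rcases eq_or_lt_of_le hb2 with hb2' | hb2'
  · have := h2 hb2'.symm; subst this; rw [← hb2']; simp
  rcases eq_or_lt_of_le ha1 with ha1' | ha1'
  · subst ha1'; simp only [zero_add, zero_mul]
    rcases eq_or_lt_of_le ha2 with ha2' | ha2'
    · simp [← ha2']
    · have : Real.log (a2 / (b1 + b2)) ≤ Real.log (a2 / b2) := by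
        apply Real.log_le_log (by positivity)
        apply div_le_div_of_nonneg_left ha2 hb2' (by linarith)
      nlinarith
  rcases eq_or_lt_of_le ha2 with ha2' | ha2'
  · subst ha2'; simp only [add_zero, zero_mul]
    have : Real.log (a1 / (b1 + b2)) ≤ Real.log (a1 / b1) := by
      apply Real.log_le_log (by positivity)
      apply div_le_div_of_nonneg_left ha1 hb1' (by linarith)
    nlinarith
  -- all positive
  have hA : (0:ℝ) < a1 + a2 := by linarith
  have hB : (0:ℝ) < b1 + b2 := by linarith
  have key : ∀ a b : ℝ, 0 < a → 0 < b →
      a - b * (a1 + a2) / (b1 + b2) ≤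
        a * Real.log (a / b) - a * Real.log ((a1 + a2) / (b1 + b2)) := by
    intro a b ha hb
    have hx : (0:ℝ) < (a / b) / ((a1 + a2) / (b1 + b2)) := by positivity
    have h := Real.log_le_sub_one_of_pos (inv_pos.mpr hx)
    rw [Real.log_inv] at h
    have hlog : Real.log ((a / b) / ((a1 + a2) / (b1 + b2))) =
        Real.log (a / b) - Real.log ((a1 + a2) / (b1 + b2)) :=
      Real.log_div (by positivity) (by positivity)
    have hinv : ((a / b) / ((a1 + a2) / (b1 + b2)))⁻¹ = b * (a1 + a2) / (a * (b1 + b2)) := by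
      field_simp
    rw [hlog, hinv] at h
    have := mul_le_mul_of_nonneg_left (by linarith :
        1 - b * (a1 + a2) / (a * (b1 + b2)) ≤ Real.log (a / b) - Real.log ((a1 + a2) / (b1 + b2)))
      (le_of_lt ha)
    have heq : a * (1 - b * (a1 + a2) / (a * (b1 + b2))) = a - b * (a1 + a2) / (b1 + b2) := by
      field_simp
    nlinarith
  have k1 := key a1 b1 ha1' hb1'
  have k2 := key a2 b2 ha2' hb2'
  have hsum : (a1 - b1 * (a1 + a2) / (b1 + b2)) + (a2 - b2 * (a1 + a2) / (b1 + b2)) = 0 := by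
    field_simp; ring
  nlinarith


lemma logb_sum_two (a1 b1 a2 b2 : ℝ) (ha1 : 0 ≤ a1) (ha2 : 0 ≤ a2)
    (hb1 : 0 ≤ b1) (hb2 : 0 ≤ b2) (h1 : b1 = 0 → a1 = 0) (h2 : b2 = 0 → a2 = 0) :
    (a1 + a2) * Real.logb 2 ((a1 + a2) / (b1 + b2)) ≤
      a1 * Real.logb 2 (a1 / b1) + a2 * Real.logb 2 (a2 / b2) := by
  have h := log_sum_two a1 b1 a2 b2 ha1 ha2 hb1 hb2 h1 h2
  have hl2 : (0:ℝ) < Real.log 2 := Real.log_pos (by norm_num)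
  simp only [Real.logb, ← mul_div_assoc, ← add_div]
  exact div_le_div_of_nonneg_right h hl2.le |>.trans_eq rfl

noncomputable def phi (p q : ℝ) : ℝ :=
  (1/2 : ℝ) * p * Real.logb 2 (p / ((1/2) * p + (1/2) * q)) +
  (1/2 : ℝ) * q * Real.logb 2 (q / ((1/2) * p + (1/2) * q))

lemma phi_zero : phi 0 0 = 0 := by simp [phi]

lemma phi_comm (p q : ℝ) : phi p q = phi q p := by
  unfold phi
  rw [add_comm ((1/2 : ℝ) * p) ((1/2 : ℝ) * q)]
  ring

lemma phi_smul (c p q : ℝ) (hc : 0 ≤ c) : phi (c * p) (c * q) = c * phi p q := by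
  rcases eq_or_lt_of_le hc with hc' | hc'
  · simp [phi, ← hc']
  · unfold phi
    have e1 : (1/2 : ℝ) * (c * p) + (1/2) * (c * q) = c * ((1/2) * p + (1/2) * q) := by ring
    rw [e1, mul_div_mul_left _ _ (ne_of_gt hc'), mul_div_mul_left _ _ (ne_of_gt hc')]
    ring

lemma phi_subadd (p1 q1 p2 q2 : ℝ) (hp1 : 0 ≤ p1) (hq1 : 0 ≤ q1)
    (hp2 : 0 ≤ p2) (hq2 : 0 ≤ q2) :
    phi (p1 + p2) (q1 + q2) ≤ phi p1 q1 + phi p2 q2 := by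
  unfold phi
  have hm : (1/2 : ℝ) * (p1 + p2) + (1/2) * (q1 + q2) =
      ((1/2) * p1 + (1/2) * q1) + ((1/2) * p2 + (1/2) * q2) := by ring
  rw [hm]
  have h1 := logb_sum_two p1 ((1/2) * p1 + (1/2) * q1) p2 ((1/2) * p2 + (1/2) * q2)
    hp1 hp2 (by linarith) (by linarith) (by intro h; linarith) (by intro h; linarith)
  have h2 := logb_sum_two q1 ((1/2) * p1 + (1/2) * q1) q2 ((1/2) * p2 + (1/2) * q2)
    hq1 hq2 (by linarith) (by linarith) (by intro h; linarith) (by intro h; linarith)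
  nlinarith [h1, h2]

lemma phi_sum_le {ι : Type*} (s : Finset ι) (a b : ι → ℝ)
    (ha : ∀ i ∈ s, 0 ≤ a i) (hb : ∀ i ∈ s, 0 ≤ b i) :
    phi (∑ i ∈ s, a i) (∑ i ∈ s, b i) ≤ ∑ i ∈ s, phi (a i) (b i) := by
  induction s using Finset.cons_induction with
  | empty => simp [phi_zero]
  | cons j s hj ih =>
    rw [Finset.sum_cons, Finset.sum_cons, Finset.sum_cons]
    calc phi (a j + ∑ i ∈ s, a i) (b j + ∑ i ∈ s, b i)
        ≤ phi (a j) (b j) + phi (∑ i ∈ s, a i) (∑ i ∈ s, b i) :=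
          phi_subadd _ _ _ _ (ha j (Finset.mem_cons_self j s))
            (hb j (Finset.mem_cons_self j s))
            (Finset.sum_nonneg fun i hi => ha i (Finset.mem_cons_of_mem hi))
            (Finset.sum_nonneg fun i hi => hb i (Finset.mem_cons_of_mem hi))
      _ ≤ phi (a j) (b j) + ∑ i ∈ s, phi (a i) (b i) := by
          exact add_le_add_right (ih (fun i hi => ha i (Finset.mem_cons_of_mem hi))
            (fun i hi => hb i (Finset.mem_cons_of_mem hi))) _

lemma Icap_eq {Y : Type} [Fintype Y] (W : Fin 2 → Y → ℝ) :
    Icap W = ∑ y, phi (W 0 y) (W 1 y) := by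
  unfold Icap phi
  exact Finset.sum_congr rfl fun y _ => by rw [Fin.sum_univ_two]

/-- `I(W⁻) ≤ I(W) ≤ I(W⁺)`. -/
theorem capacity_polarization {Y : Type} [Fintype Y]
    (W : Fin 2 → Y → ℝ) (hW : IsChannel W) :
    Icap (Wminus W) ≤ Icap W ∧ Icap W ≤ Icap (Wplus W) := by
  obtain ⟨hpos, hsum⟩ := hW
  constructor
  · -- minus side
    rw [Icap_eq, Icap_eq]
    have step : ∀ p : Y × Y, phi (Wminus W 0 p) (Wminus W 1 p) ≤
        ((1/2) * W 0 p.2 + (1/2) * W 1 p.2) * phi (W 0 p.1) (W 1 p.1) := by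
      intro p
      have e0 : Wminus W 0 p = ((1/2) * W 0 p.2) * W 0 p.1 + ((1/2) * W 1 p.2) * W 1 p.1 := by
        simp [Wminus, Fin.sum_univ_two]; ring
      have e1 : Wminus W 1 p = ((1/2) * W 0 p.2) * W 1 p.1 + ((1/2) * W 1 p.2) * W 0 p.1 := by
        simp [Wminus, Fin.sum_univ_two, show (1 + 1 : Fin 2) = 0 from rfl]; ring
      rw [e0, e1]
      calc phi (((1/2) * W 0 p.2) * W 0 p.1 + ((1/2) * W 1 p.2) * W 1 p.1)
              (((1/2) * W 0 p.2) * W 1 p.1 + ((1/2) * W 1 p.2) * W 0 p.1)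
          ≤ phi (((1/2) * W 0 p.2) * W 0 p.1) (((1/2) * W 0 p.2) * W 1 p.1) +
            phi (((1/2) * W 1 p.2) * W 1 p.1) (((1/2) * W 1 p.2) * W 0 p.1) :=
            phi_subadd _ _ _ _
              (mul_nonneg (mul_nonneg (by norm_num) (hpos _ _)) (hpos _ _))
              (mul_nonneg (mul_nonneg (by norm_num) (hpos _ _)) (hpos _ _))
              (mul_nonneg (mul_nonneg (by norm_num) (hpos _ _)) (hpos _ _))
              (mul_nonneg (mul_nonneg (by norm_num) (hpos _ _)) (hpos _ _))
        _ = ((1/2) * W 0 p.2) * phi (W 0 p.1) (W 1 p.1) +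
            ((1/2) * W 1 p.2) * phi (W 1 p.1) (W 0 p.1) := by
            rw [phi_smul _ _ _ (mul_nonneg (by norm_num) (hpos _ _)),
              phi_smul _ _ _ (mul_nonneg (by norm_num) (hpos _ _))]
        _ = ((1/2) * W 0 p.2 + (1/2) * W 1 p.2) * phi (W 0 p.1) (W 1 p.1) := by
            rw [phi_comm (W 1 p.1) (W 0 p.1)]; ring
    calc ∑ p : Y × Y, phi (Wminus W 0 p) (Wminus W 1 p)
        ≤ ∑ p : Y × Y, ((1/2) * W 0 p.2 + (1/2) * W 1 p.2) * phi (W 0 p.1) (W 1 p.1) :=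
          Finset.sum_le_sum fun p _ => step p
      _ = ∑ y : Y, phi (W 0 y) (W 1 y) := by
          rw [Fintype.sum_prod_type]
          have : ∀ y1 : Y, ∑ y2 : Y, ((1/2) * W 0 y2 + (1/2) * W 1 y2) * phi (W 0 y1) (W 1 y1)
              = phi (W 0 y1) (W 1 y1) := by
            intro y1
            rw [← Finset.sum_mul, Finset.sum_add_distrib, ← Finset.mul_sum, ← Finset.mul_sum,
              hsum 0, hsum 1]
            ring
          simp only [this]
  · -- plus side
    rw [Icap_eq, Icap_eq]
    have hdecomp : ∀ (x : Fin 2) (y2 : Y),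
        W x y2 = ∑ q : Y × Fin 2, Wplus W x (q.1, y2, q.2) := by
      intro x y2
      simp only [Wplus]
      rw [Fintype.sum_prod_type, Finset.sum_comm]
      have h1 : ∀ b : Fin 2, ∑ a : Y, (1/2 : ℝ) * W (b + x) a * W x y2
          = (1/2) * W x y2 := by
        intro b
        rw [← Finset.sum_mul, ← Finset.mul_sum, hsum (b + x)]
        ring
      rw [Fin.sum_univ_two, h1 0, h1 1]
      ring
    calc ∑ y : Y, phi (W 0 y) (W 1 y)
        = ∑ y : Y, phi (∑ q : Y × Fin 2, Wplus W 0 (q.1, y, q.2))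
            (∑ q : Y × Fin 2, Wplus W 1 (q.1, y, q.2)) := by
          simp only [← hdecomp]
      _ ≤ ∑ y : Y, ∑ q : Y × Fin 2, phi (Wplus W 0 (q.1, y, q.2)) (Wplus W 1 (q.1, y, q.2)) :=
          Finset.sum_le_sum fun y _ => phi_sum_le _ _ _
            (fun q _ => mul_nonneg (mul_nonneg (by norm_num) (hpos _ _)) (hpos _ _))
            (fun q _ => mul_nonneg (mul_nonneg (by norm_num) (hpos _ _)) (hpos _ _))
      _ = ∑ p : Y × Y × Fin 2, phi (Wplus W 0 p) (Wplus W 1 p) := by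
          simp only [Fintype.sum_prod_type]
          exact Finset.sum_comm
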